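/- Let v be a germ of a holomorphic vector field on (ℂ^m, 0) and let Z be the coordinate subspace defined by x₁ = ⋯ = x_r = 0. If for every vector field w that preserves the ideal I_Z (i.e. w(I_Z) ⊆ I_Z) the Lie bracket [v, w] also preserves I_Z, then v itself preserves I_Z. -/
import Mathlib


/- STATEMENT 0: A germ of a vector field `v` on (ℂ^m,0) (modeled algebraically, with
polynomial coefficients) such that `[v,w]` preserves the ideal `I_Z = (x₁,…,x_r)` for
every vector field `w` preserving `I_Z`, itself preserves `I_Z`.
A vector field is given by its coefficients `v : Fin m → ℂ[x₁,…,x_m]`, acting on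
functions by `act v f = ∑ i, v i * ∂f/∂xᵢ`; the bracket acts by
`[v,w](f) = v(w(f)) − w(v(f))`. -/

open MvPolynomial

/-- Action of the vector field with coefficients `v` on a function `f`. -/
noncomputable def act {m : ℕ} (v : Fin m → MvPolynomial (Fin m) ℂ)
    (f : MvPolynomial (Fin m) ℂ) : MvPolynomial (Fin m) ℂ :=
  ∑ i, v i * pderiv i f

lemma act_single {m : ℕ} (i : Fin m) (c : MvPolynomial (Fin m) ℂ)
    (f : MvPolynomial (Fin m) ℂ) :
    act (fun j => if j = i then c else 0) f = c * pderiv i f := by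
  unfold act
  rw [Finset.sum_eq_single i]
  · simp
  · intro b _ hb; simp [hb]
  · simp

lemma act_mul {m : ℕ} (v : Fin m → MvPolynomial (Fin m) ℂ)
    (f g : MvPolynomial (Fin m) ℂ) :
    act v (f * g) = f * act v g + g * act v f := by
  unfold act
  simp only [Finset.mul_sum, ← Finset.sum_add_distrib]
  apply Finset.sum_congr rfl
  intro i _
  rw [(pderiv i).leibniz f g]
  simp only [smul_eq_mul]
  ring

theorem stmt_0 (m r : ℕ) (hr : r ≤ m) (v : Fin m → MvPolynomial (Fin m) ℂ)
    (I : Ideal (MvPolynomial (Fin m) ℂ))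
    (hI : I = Ideal.span ((fun i => (X i : MvPolynomial (Fin m) ℂ)) ''
      {i : Fin m | (i : ℕ) < r}))
    (H : ∀ w : Fin m → MvPolynomial (Fin m) ℂ,
      (∀ f ∈ I, act w f ∈ I) →
      ∀ f ∈ I, act v (act w f) - act w (act v f) ∈ I) :
    ∀ f ∈ I, act v f ∈ I := by
  -- Step 1: act v (X i) ∈ I for i < r, using the logarithmic field w = X i ∂_i
  have hXmem : ∀ i : Fin m, (i : ℕ) < r → (X i : MvPolynomial (Fin m) ℂ) ∈ I := by
    intro i hi
    rw [hI]
    exact Ideal.subset_span ⟨i, hi, rfl⟩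
  have key : ∀ i : Fin m, (i : ℕ) < r → act v (X i) ∈ I := by
    intro i hi
    set w : Fin m → MvPolynomial (Fin m) ℂ := fun j => if j = i then X i else 0 with hw
    have hwI : ∀ f ∈ I, act w f ∈ I := by
      intro f hf
      rw [hw, act_single]
      exact I.mul_mem_right _ (hXmem i hi)
    have hb := H w hwI (X i) (hXmem i hi)
    rw [hw] at hb
    rw [act_single, act_single] at hb
    simp only [pderiv_X_self, mul_one] at hb
    have h2 : X i * pderiv i (act v (X i)) ∈ I := I.mul_mem_right _ (hXmem i hi)
    have := I.add_mem hb h2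
    simpa using this
  -- Step 2: induction on the span
  intro f hf
  rw [hI] at hf
  have : act v f ∈ I ∧ f ∈ I := by
    refine Submodule.span_induction ?_ ?_ ?_ ?_ hf
    · rintro x ⟨i, hi, rfl⟩
      exact ⟨key i hi, hXmem i hi⟩
    · constructor
      · have : act v (0 : MvPolynomial (Fin m) ℂ) = 0 := by simp [act]
        rw [this]; exact I.zero_mem
      · exact I.zero_mem
    · intro a b _ _ ha hb
      constructor
      · have : act v (a + b) = act v a + act v b := by
          simp [act, mul_add, Finset.sum_add_distrib]
        rw [this]; exact I.add_mem ha.1 hb.1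
      · exact I.add_mem ha.2 hb.2
    · intro c x _ hx
      constructor
      · have : act v (c • x) = c * act v x + x * act v c := by
          rw [smul_eq_mul]; exact act_mul v c x
        rw [this]
        exact I.add_mem (I.mul_mem_left _ hx.1) (I.mul_mem_right _ hx.2)
      · rw [smul_eq_mul]; exact I.mul_mem_left _ hx.2
  exact this.1
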